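/- Let s be a random variable on a finite probability space taking values in a finite set S, and let ω^1,…,ω^n be random variables taking values in finite sets that are mutually conditionally independent given s. Then the set function f(ι) = I(s; ∪_{i∈ι} ω^i) satisfies f(∅) = 0, is monotone nondecreasing, and is submodular on subsets of {1,…,n}. -/

import Mathlib

open Finset

/-- A probability mass function on a finite sample space `Ω`. -/
structure FinProb (Ω : Type*) [Fintype Ω] where
  pr : Ω → ℝ
  nonneg : ∀ x, 0 ≤ pr x
  sum_one : ∑ x, pr x = 1

variable {Ω : Type*} [Fintype Ω]

/-- The probability that the random variable `X` takes the value `v`. -/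
def FinProb.probEq (μ : FinProb Ω) {S : Type*} [DecidableEq S] (X : Ω → S) (v : S) : ℝ :=
  ∑ x, if X x = v then μ.pr x else 0

/-- Shannon entropy (natural logarithm) of a random variable with values in a finite type. -/
noncomputable def FinProb.entropy (μ : FinProb Ω) {S : Type*} [Fintype S] [DecidableEq S]
    (X : Ω → S) : ℝ :=
  ∑ v, Real.negMulLog (μ.probEq X v)

/-- Conditional Shannon entropy `H(X|Y) = H(X,Y) - H(Y)`. -/
noncomputable def FinProb.condEntropy (μ : FinProb Ω) {S T : Type*} [Fintype S] [DecidableEq S]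
    [Fintype T] [DecidableEq T] (X : Ω → S) (Y : Ω → T) : ℝ :=
  μ.entropy (fun x => (X x, Y x)) - μ.entropy Y

/-- Mutual information `I(X;Y) = H(X) - H(X|Y)`. -/
noncomputable def FinProb.mutualInfo (μ : FinProb Ω) {S T : Type*} [Fintype S] [DecidableEq S]
    [Fintype T] [DecidableEq T] (X : Ω → S) (Y : Ω → T) : ℝ :=
  μ.entropy X - μ.condEntropy X Y

/-- The joint random variable `∪_{i ∈ ι} ω^i`, i.e. the tuple of the `ω^i` for `i ∈ ι`. -/
def tupleRV {n : ℕ} {W : Fin n → Type*} (ωs : ∀ i, Ω → W i) (ι : Finset (Fin n)) :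
    Ω → (∀ i : ι, W i) :=
  fun x i => ωs i x

/-- The random variables `ω^1, …, ω^n` are mutually conditionally independent given `s` :
for all disjoint index sets `I, J ⊆ {1,…,n}` and all values `a`, `b`, `v`,
`Pr(ω_I = a, ω_J = b, s = v) · Pr(s = v) = Pr(ω_I = a, s = v) · Pr(ω_J = b, s = v)`
(this is the product formula for the conditional probabilities, cleared of denominators). -/
def CondIndepGiven (μ : FinProb Ω) {S : Type*} [DecidableEq S] {n : ℕ}
    {W : Fin n → Type*} [∀ i, DecidableEq (W i)]
    (s : Ω → S) (ωs : ∀ i, Ω → W i) : Prop :=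
  ∀ I J : Finset (Fin n), Disjoint I J →
    ∀ (a : ∀ i : I, W i) (b : ∀ j : J, W j) (v : S),
      μ.probEq (fun x => (tupleRV ωs I x, tupleRV ωs J x, s x)) (a, b, v) * μ.probEq s v =
        μ.probEq (fun x => (tupleRV ωs I x, s x)) (a, v) *
          μ.probEq (fun x => (tupleRV ωs J x, s x)) (b, v)

/-- Kullback–Leibler divergence `D_KL(p‖q) = Σ_x p(x) log(p(x)/q(x))` (natural logarithm)
between finitely supported distributions. -/
noncomputable def klDiv {S : Type*} [Fintype S] (p q : S → ℝ) : ℝ :=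
  ∑ x, p x * Real.log (p x / q x)

/-- The posterior distribution of `s` given the observation `Y = w` (Bayes' rule). -/
noncomputable def FinProb.posterior (μ : FinProb Ω) {S T : Type*} [DecidableEq S] [DecidableEq T]
    (s : Ω → S) (Y : Ω → T) (w : T) : S → ℝ :=
  fun v => μ.probEq (fun x => (s x, Y x)) (v, w) / μ.probEq Y w

namespace FinProb
variable {Ω : Type*} [Fintype Ω] (μ : FinProb Ω)

lemma probEq_nonneg {S : Type*} [DecidableEq S] (X : Ω → S) (v : S) : 0 ≤ μ.probEq X v :=
  Finset.sum_nonneg fun x _ => by split <;> simp [μ.nonneg x]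

lemma sum_probEq {S : Type*} [Fintype S] [DecidableEq S] (X : Ω → S) :
    ∑ v, μ.probEq X v = 1 := by
  unfold FinProb.probEq
  rw [Finset.sum_comm]
  simp [μ.sum_one]

/-- marginalize over the first coordinate of a pair -/
lemma marg_fst {S T : Type*} [Fintype S] [DecidableEq S] [DecidableEq T]
    (X : Ω → S) (Y : Ω → T) (w : T) :
    ∑ v, μ.probEq (fun a => (X a, Y a)) (v, w) = μ.probEq Y w := by
  unfold FinProb.probEq
  rw [Finset.sum_comm]
  refine Finset.sum_congr rfl fun a _ => ?_
  by_cases h : Y a = w <;> simp [Prod.ext_iff, h]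

/-- marginalize over the second coordinate of a pair -/
lemma marg_snd {S T : Type*} [DecidableEq S] [Fintype T] [DecidableEq T]
    (X : Ω → S) (Y : Ω → T) (v : S) :
    ∑ w, μ.probEq (fun a => (X a, Y a)) (v, w) = μ.probEq X v := by
  unfold FinProb.probEq
  rw [Finset.sum_comm]
  refine Finset.sum_congr rfl fun a _ => ?_
  by_cases h : X a = v <;> simp [Prod.ext_iff, h]

/-- marginalize over the middle coordinate of a triple -/
lemma marg_mid {S T U : Type*} [DecidableEq S] [Fintype T] [DecidableEq T] [DecidableEq U]
    (X : Ω → S) (Y : Ω → T) (Z : Ω → U) (v : S) (u : U) :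
    ∑ w, μ.probEq (fun a => (X a, Y a, Z a)) (v, w, u) =
      μ.probEq (fun a => (X a, Z a)) (v, u) := by
  unfold FinProb.probEq
  rw [Finset.sum_comm]
  refine Finset.sum_congr rfl fun a _ => ?_
  by_cases h1 : X a = v <;> by_cases h2 : Z a = u <;> simp [Prod.ext_iff, h1, h2]

/-- pointwise bound of a joint probability by a marginal (middle coordinate version) -/
lemma le_marg_mid {S T U : Type*} [DecidableEq S] [Fintype T] [DecidableEq T] [DecidableEq U]
    (X : Ω → S) (Y : Ω → T) (Z : Ω → U) (v : S) (w : T) (u : U) :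
    μ.probEq (fun a => (X a, Y a, Z a)) (v, w, u) ≤ μ.probEq (fun a => (X a, Z a)) (v, u) := by
  rw [← marg_mid μ X Y Z v u]
  exact Finset.single_le_sum (f := fun w => μ.probEq (fun a => (X a, Y a, Z a)) (v, w, u))
    (fun i _ => μ.probEq_nonneg _ _) (Finset.mem_univ w)

lemma le_marg_fst {S T : Type*} [Fintype S] [DecidableEq S] [DecidableEq T]
    (X : Ω → S) (Y : Ω → T) (v : S) (w : T) :
    μ.probEq (fun a => (X a, Y a)) (v, w) ≤ μ.probEq Y w := by
  rw [← marg_fst μ X Y w]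
  exact Finset.single_le_sum (f := fun v => μ.probEq (fun a => (X a, Y a)) (v, w))
    (fun i _ => μ.probEq_nonneg _ _) (Finset.mem_univ v)

end FinProb
namespace FinProb
variable {Ω : Type*} [Fintype Ω] (μ : FinProb Ω)

lemma entropy_comp_equiv {S T : Type*} [Fintype S] [DecidableEq S] [Fintype T] [DecidableEq T]
    (X : Ω → S) (e : S ≃ T) : μ.entropy (fun a => e (X a)) = μ.entropy X := by
  unfold FinProb.entropy
  rw [← Equiv.sum_comp e (fun t => Real.negMulLog (μ.probEq (fun a => e (X a)) t))]
  refine Finset.sum_congr rfl fun v _ => ?_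
  congr 1
  unfold FinProb.probEq
  refine Finset.sum_congr rfl fun a _ => ?_
  simp [e.injective.eq_iff]

lemma entropy_pair_comm {S T : Type*} [Fintype S] [DecidableEq S] [Fintype T] [DecidableEq T]
    (X : Ω → S) (Y : Ω → T) :
    μ.entropy (fun a => (X a, Y a)) = μ.entropy (fun a => (Y a, X a)) := by
  have := μ.entropy_comp_equiv (fun a => (Y a, X a)) (Equiv.prodComm T S)
  simpa using this

/-- If `X` is determined by `Y`, the pair `(X, Y)` has the same entropy as `Y`. -/
lemma entropy_pair_of_det {S T : Type*} [Fintype S] [DecidableEq S] [Fintype T] [DecidableEq T]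
    (X : Ω → S) (Y : Ω → T) (g : T → S) (hg : ∀ a, X a = g (Y a)) :
    μ.entropy (fun a => (X a, Y a)) = μ.entropy Y := by
  have key : ∀ v w, μ.probEq (fun a => (X a, Y a)) (v, w)
      = if v = g w then μ.probEq Y w else 0 := by
    intro v w
    unfold FinProb.probEq
    by_cases hv : v = g w
    · rw [if_pos hv]
      refine Finset.sum_congr rfl fun a _ => ?_
      by_cases hY : Y a = w <;> simp [Prod.ext_iff, hY, hg a, hv]
    · rw [if_neg hv]
      refine Finset.sum_eq_zero fun a _ => ?_
      simp only [Prod.ext_iff, ite_eq_right_iff, and_imp]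
      intro h1 h2
      subst h1 h2; exact absurd (hg a) hv
  unfold FinProb.entropy
  rw [Fintype.sum_prod_type, Finset.sum_comm]
  refine Finset.sum_congr rfl fun w _ => ?_
  simp [key, apply_ite Real.negMulLog]

/-- If `X` and `Y` mutually determine each other, they have the same entropy. -/
lemma entropy_eq_of_det {S T : Type*} [Fintype S] [DecidableEq S] [Fintype T] [DecidableEq T]
    (X : Ω → S) (Y : Ω → T) (g : T → S) (h : S → T)
    (hg : ∀ a, X a = g (Y a)) (hh : ∀ a, Y a = h (X a)) : μ.entropy X = μ.entropy Y := by
  have e1 := μ.entropy_pair_of_det X Y g hg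
  have e2 := μ.entropy_pair_of_det Y X h hh
  rw [μ.entropy_pair_comm Y X] at e2
  rw [← e1, e2]

lemma entropy_unique {T : Type*} [Fintype T] [DecidableEq T] [Unique T] (X : Ω → T) :
    μ.entropy X = 0 := by
  have : ∀ x, X x = default := fun x => Unique.eq_default _
  simp [FinProb.entropy, FinProb.probEq, Finset.univ_unique, this, μ.sum_one]

end FinProb
lemma sum_swap3 {S T U : Type*} [Fintype S] [Fintype T] [Fintype U] (f : S → T → U → ℝ) :
    ∑ x, ∑ y, ∑ z, f x y z = ∑ z, ∑ x, ∑ y, f x y z :=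
  (Finset.sum_congr rfl fun _ _ => Finset.sum_comm).trans Finset.sum_comm

lemma sum_swap3' {S T U : Type*} [Fintype S] [Fintype T] [Fintype U] (f : S → T → U → ℝ) :
    ∑ x, ∑ y, ∑ z, f x y z = ∑ y, ∑ z, ∑ x, f x y z :=
  Finset.sum_comm.trans (Finset.sum_congr rfl fun _ _ => Finset.sum_comm)

/-- Termwise log-sum inequality. -/
lemma term_ineq (p pa pb pc : ℝ)
    (hp : 0 ≤ p) (hpa : p ≤ pa) (hpb : p ≤ pb) (hpc : p ≤ pc)
    (h0a : 0 ≤ pa) (h0b : 0 ≤ pb) (h0c : 0 ≤ pc) :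
    p - pa * pb / pc ≤
      p * Real.log p + p * Real.log pc - p * Real.log pa - p * Real.log pb := by
  rcases eq_or_lt_of_le hp with h | h
  · have : 0 ≤ pa * pb / pc := by positivity
    simp [← h]
    linarith
  · have ha : 0 < pa := lt_of_lt_of_le h hpa
    have hb : 0 < pb := lt_of_lt_of_le h hpb
    have hc : 0 < pc := lt_of_lt_of_le h hpc
    set q : ℝ := pa * pb / pc with hq
    have hqpos : 0 < q := by positivity
    have hlog : Real.log (q / p) ≤ q / p - 1 := Real.log_le_sub_one_of_pos (by positivity)
    have hlq : Real.log (q / p) = Real.log pa + Real.log pb - Real.log pc - Real.log p := by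
      rw [hq, div_div, Real.log_div (by positivity) (by positivity),
        Real.log_mul (ne_of_gt ha) (ne_of_gt hb), Real.log_mul (ne_of_gt hc) (ne_of_gt h)]
      ring
    have hmul : p * Real.log (q / p) ≤ p * (q / p - 1) :=
      mul_le_mul_of_nonneg_left hlog hp
    have : p * (q / p - 1) = q - p := by field_simp
    rw [this, hlq] at hmul
    nlinarith [hmul]

namespace FinProb
variable {Ω : Type*} [Fintype Ω] (μ : FinProb Ω)

/-- Submodularity of entropy: `H(X,Y,Z) + H(Z) ≤ H(X,Z) + H(Y,Z)`. -/
lemma core_ineq {S T U : Type*} [Fintype S] [DecidableEq S] [Fintype T] [DecidableEq T]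
    [Fintype U] [DecidableEq U] (X : Ω → S) (Y : Ω → T) (Z : Ω → U) :
    μ.entropy (fun a => (X a, Y a, Z a)) + μ.entropy Z ≤
      μ.entropy (fun a => (X a, Z a)) + μ.entropy (fun a => (Y a, Z a)) := by
  set p : S → T → U → ℝ := fun x y z => μ.probEq (fun a => (X a, Y a, Z a)) (x, y, z) with hp
  set pxz : S → U → ℝ := fun x z => μ.probEq (fun a => (X a, Z a)) (x, z) with hpxz
  set pyz : T → U → ℝ := fun y z => μ.probEq (fun a => (Y a, Z a)) (y, z) with hpyz
  set pz : U → ℝ := fun z => μ.probEq Z z with hpz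
  have hm1 : ∀ x z, ∑ y, p x y z = pxz x z := fun x z => μ.marg_mid X Y Z x z
  have hm2 : ∀ y z, ∑ x, p x y z = pyz y z := fun y z => μ.marg_fst X (fun a => (Y a, Z a)) (y, z)
  have hm3 : ∀ z, ∑ y, pyz y z = pz z := fun z => μ.marg_fst Y Z z
  have hm4 : ∀ z, ∑ x, pxz x z = pz z := fun z => μ.marg_fst X Z z
  have hsum : ∑ z, pz z = 1 := μ.sum_probEq Z
  have hnn : ∀ x y z, 0 ≤ p x y z := fun x y z => μ.probEq_nonneg _ _
  -- entropy expansions as triple sums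
  have eXYZ : μ.entropy (fun a => (X a, Y a, Z a))
      = ∑ x, ∑ y, ∑ z, -(p x y z * Real.log (p x y z)) := by
    simp [FinProb.entropy, Fintype.sum_prod_type, Real.negMulLog, neg_mul, hp]
  have eZ : μ.entropy Z = ∑ x, ∑ y, ∑ z, -(p x y z * Real.log (pz z)) := by
    rw [sum_swap3]
    rw [show μ.entropy Z = ∑ z, -(pz z * Real.log (pz z)) by
      simp [FinProb.entropy, Real.negMulLog, neg_mul, hpz]]
    refine Finset.sum_congr rfl fun z _ => ?_
    conv_rhs => rw [show (∑ x, ∑ y, -(p x y z * Real.log (pz z)))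
      = -((∑ x, ∑ y, p x y z) * Real.log (pz z)) by
        rw [Finset.sum_mul]; simp [Finset.sum_mul]]
    rw [Finset.sum_congr rfl fun x (_ : x ∈ Finset.univ) => hm1 x z, hm4]
  have eXZ : μ.entropy (fun a => (X a, Z a))
      = ∑ x, ∑ y, ∑ z, -(p x y z * Real.log (pxz x z)) := by
    rw [show μ.entropy (fun a => (X a, Z a)) = ∑ x, ∑ z, -(pxz x z * Real.log (pxz x z)) by
      simp [FinProb.entropy, Fintype.sum_prod_type, Real.negMulLog, neg_mul, hpxz]]
    refine Finset.sum_congr rfl fun x _ => ?_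
    rw [Finset.sum_comm]
    refine Finset.sum_congr rfl fun z _ => ?_
    rw [show ∑ y, -(p x y z * Real.log (pxz x z)) = -((∑ y, p x y z) * Real.log (pxz x z)) by
      rw [Finset.sum_mul]; simp]
    rw [hm1]
  have eYZ : μ.entropy (fun a => (Y a, Z a))
      = ∑ x, ∑ y, ∑ z, -(p x y z * Real.log (pyz y z)) := by
    rw [sum_swap3']
    rw [show μ.entropy (fun a => (Y a, Z a)) = ∑ y, ∑ z, -(pyz y z * Real.log (pyz y z)) by
      simp [FinProb.entropy, Fintype.sum_prod_type, Real.negMulLog, neg_mul, hpyz]]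
    refine Finset.sum_congr rfl fun y _ => ?_
    refine Finset.sum_congr rfl fun z _ => ?_
    rw [show ∑ x, -(p x y z * Real.log (pyz y z)) = -((∑ x, p x y z) * Real.log (pyz y z)) by
      rw [Finset.sum_mul]; simp]
    rw [hm2]
  -- total masses
  have hptot : ∑ x, ∑ y, ∑ z, p x y z = 1 := by
    have := μ.sum_probEq (fun a => (X a, Y a, Z a))
    simp only [Fintype.sum_prod_type] at this
    exact this
  have hqtot : ∑ x, ∑ y, ∑ z, (pxz x z * pyz y z / pz z) = 1 := by
    rw [sum_swap3]
    have hz : ∀ z, (∑ x, ∑ y, pxz x z * pyz y z / pz z) = pz z := by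
      intro z
      have h1 : ∀ x, ∑ y, pxz x z * pyz y z / pz z = pxz x z * pz z / pz z := fun x => by
        rw [← Finset.sum_div, ← Finset.mul_sum, hm3]
      rw [Finset.sum_congr rfl fun x _ => h1 x, ← Finset.sum_div, ← Finset.sum_mul, hm4]
      by_cases h : pz z = 0
      · simp [h]
      · field_simp
    rw [Finset.sum_congr rfl fun z _ => hz z, hsum]
  -- the main estimate
  have step1 : ∑ x, ∑ y, ∑ z, (p x y z - pxz x z * pyz y z / pz z) ≤
      ∑ x, ∑ y, ∑ z, (p x y z * Real.log (p x y z) + p x y z * Real.log (pz z)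
        - p x y z * Real.log (pxz x z) - p x y z * Real.log (pyz y z)) :=
    Finset.sum_le_sum fun x _ => Finset.sum_le_sum fun y _ => Finset.sum_le_sum fun z _ =>
      term_ineq (p x y z) (pxz x z) (pyz y z) (pz z) (hnn x y z)
        (μ.le_marg_mid X Y Z x y z)
        (μ.le_marg_fst X (fun a => (Y a, Z a)) x (y, z))
        (le_trans (μ.le_marg_mid X Y Z x y z) (μ.le_marg_fst X Z x z))
        (μ.probEq_nonneg _ _) (μ.probEq_nonneg _ _) (μ.probEq_nonneg _ _)
  simp only [Finset.sum_sub_distrib, Finset.sum_add_distrib, hptot, hqtot] at step1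
  rw [eXYZ, eZ, eXZ, eYZ]
  simp only [Finset.sum_neg_distrib]
  linarith [step1]

end FinProb
namespace FinProb
variable {Ω : Type*} [Fintype Ω] (μ : FinProb Ω)

/-- If `A` and `B` are conditionally independent given `s`, then
`H(A,B,s) + H(s) = H(A,s) + H(B,s)`. -/
lemma condindep_entropy {S T U : Type*} [Fintype S] [DecidableEq S] [Fintype T] [DecidableEq T]
    [Fintype U] [DecidableEq U] (A : Ω → S) (B : Ω → T) (s : Ω → U)
    (h : ∀ a b v, μ.probEq (fun x => (A x, B x, s x)) (a, b, v) * μ.probEq s v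
        = μ.probEq (fun x => (A x, s x)) (a, v) * μ.probEq (fun x => (B x, s x)) (b, v)) :
    μ.entropy (fun x => (A x, B x, s x)) + μ.entropy s
      = μ.entropy (fun x => (A x, s x)) + μ.entropy (fun x => (B x, s x)) := by
  set p : S → T → U → ℝ := fun x y z => μ.probEq (fun a => (A a, B a, s a)) (x, y, z) with hp
  set pa : S → U → ℝ := fun x z => μ.probEq (fun a => (A a, s a)) (x, z) with hpa
  set pb : T → U → ℝ := fun y z => μ.probEq (fun a => (B a, s a)) (y, z) with hpb
  set ps : U → ℝ := fun z => μ.probEq s z with hps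
  have hm1 : ∀ x z, ∑ y, p x y z = pa x z := fun x z => μ.marg_mid A B s x z
  have hm2 : ∀ y z, ∑ x, p x y z = pb y z := fun y z => μ.marg_fst A (fun a => (B a, s a)) (y, z)
  have hm3 : ∀ z, ∑ y, pb y z = ps z := fun z => μ.marg_fst B s z
  have hm4 : ∀ z, ∑ x, pa x z = ps z := fun z => μ.marg_fst A s z
  have hnn : ∀ x y z, 0 ≤ p x y z := fun x y z => μ.probEq_nonneg _ _
  have eXYZ : μ.entropy (fun a => (A a, B a, s a))
      = ∑ x, ∑ y, ∑ z, -(p x y z * Real.log (p x y z)) := by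
    simp [FinProb.entropy, Fintype.sum_prod_type, Real.negMulLog, neg_mul, hp]
  have eZ : μ.entropy s = ∑ x, ∑ y, ∑ z, -(p x y z * Real.log (ps z)) := by
    rw [sum_swap3]
    rw [show μ.entropy s = ∑ z, -(ps z * Real.log (ps z)) by
      simp [FinProb.entropy, Real.negMulLog, neg_mul, hps]]
    refine Finset.sum_congr rfl fun z _ => ?_
    conv_rhs => rw [show (∑ x, ∑ y, -(p x y z * Real.log (ps z)))
      = -((∑ x, ∑ y, p x y z) * Real.log (ps z)) by
        rw [Finset.sum_mul]; simp [Finset.sum_mul]]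
    rw [Finset.sum_congr rfl fun x (_ : x ∈ Finset.univ) => hm1 x z, hm4]
  have eXZ : μ.entropy (fun a => (A a, s a))
      = ∑ x, ∑ y, ∑ z, -(p x y z * Real.log (pa x z)) := by
    rw [show μ.entropy (fun a => (A a, s a)) = ∑ x, ∑ z, -(pa x z * Real.log (pa x z)) by
      simp [FinProb.entropy, Fintype.sum_prod_type, Real.negMulLog, neg_mul, hpa]]
    refine Finset.sum_congr rfl fun x _ => ?_
    rw [Finset.sum_comm]
    refine Finset.sum_congr rfl fun z _ => ?_
    rw [show ∑ y, -(p x y z * Real.log (pa x z)) = -((∑ y, p x y z) * Real.log (pa x z)) by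
      rw [Finset.sum_mul]; simp]
    rw [hm1]
  have eYZ : μ.entropy (fun a => (B a, s a))
      = ∑ x, ∑ y, ∑ z, -(p x y z * Real.log (pb y z)) := by
    rw [sum_swap3']
    rw [show μ.entropy (fun a => (B a, s a)) = ∑ y, ∑ z, -(pb y z * Real.log (pb y z)) by
      simp [FinProb.entropy, Fintype.sum_prod_type, Real.negMulLog, neg_mul, hpb]]
    refine Finset.sum_congr rfl fun y _ => ?_
    refine Finset.sum_congr rfl fun z _ => ?_
    rw [show ∑ x, -(p x y z * Real.log (pb y z)) = -((∑ x, p x y z) * Real.log (pb y z)) by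
      rw [Finset.sum_mul]; simp]
    rw [hm2]
  rw [eXYZ, eZ, eXZ, eYZ]
  simp only [← Finset.sum_add_distrib, ← neg_add]
  refine Finset.sum_congr rfl fun x _ => Finset.sum_congr rfl fun y _ =>
    Finset.sum_congr rfl fun z _ => ?_
  congr 1
  rcases eq_or_lt_of_le (hnn x y z) with h0 | h0
  · rw [← h0]; ring
  · have hA : 0 < pa x z := lt_of_lt_of_le h0 (μ.le_marg_mid A B s x y z)
    have hB : 0 < pb y z := lt_of_lt_of_le h0 (μ.le_marg_fst A (fun a => (B a, s a)) x (y, z))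
    have hS : 0 < ps z :=
      lt_of_lt_of_le h0 (le_trans (μ.le_marg_mid A B s x y z) (μ.le_marg_fst A s x z))
    have hlog : Real.log (p x y z * ps z) = Real.log (pa x z * pb y z) := by
      rw [h x y z]
    rw [Real.log_mul (ne_of_gt h0) (ne_of_gt hS), Real.log_mul (ne_of_gt hA) (ne_of_gt hB)]
      at hlog
    nlinarith [hlog]

end FinProb
section Tuple
variable {Ω : Type*} {n : ℕ} {W : Fin n → Type*}

/-- Restriction of a tuple to a subfamily. -/
def restr {ι₁ ι₂ : Finset (Fin n)} (h : ι₁ ⊆ ι₂) (f : ∀ i : ι₂, W i) : ∀ i : ι₁, W i :=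
  fun i => f ⟨i, h i.2⟩

/-- Combination of two tuples into a tuple over the union. -/
def comb {ι₁ ι₂ : Finset (Fin n)} (f : (∀ i : ι₁, W i) × (∀ i : ι₂, W i)) :
    ∀ i : (ι₁ ∪ ι₂ : Finset (Fin n)), W i :=
  fun i => if h : (i : Fin n) ∈ ι₁ then f.1 ⟨i, h⟩
    else f.2 ⟨i, (Finset.mem_union.mp i.2).resolve_left h⟩

lemma restr_tuple {ι₁ ι₂ : Finset (Fin n)} (h : ι₁ ⊆ ι₂) (ωs : ∀ i, Ω → W i) (x : Ω) :
    tupleRV ωs ι₁ x = restr h (tupleRV ωs ι₂ x) := rfl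

lemma restr_comb_tuple {ι₁ ι₂ κ : Finset (Fin n)} (h : κ ⊆ ι₁ ∪ ι₂) (ωs : ∀ i, Ω → W i)
    (x : Ω) : tupleRV ωs κ x = restr h (comb (tupleRV ωs ι₁ x, tupleRV ωs ι₂ x)) := by
  funext i
  unfold restr comb tupleRV
  dsimp only
  split <;> rfl

end Tuple
/-- For mutually conditionally independent observations `ω^1,…,ω^n` given `s`,
the set function `f(ι) = I(s; ∪_{i∈ι} ω^i)` satisfies `f(∅) = 0`, is monotone nondecreasing,
and is submodular on subsets of `{1,…,n}`. -/
theorem mutualInfo_normalized_monotone_submodular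
    {Ω : Type*} [Fintype Ω] (μ : FinProb Ω)
    {S : Type*} [Fintype S] [DecidableEq S]
    {n : ℕ} {W : Fin n → Type*} [∀ i, Fintype (W i)] [∀ i, DecidableEq (W i)]
    (s : Ω → S) (ωs : ∀ i, Ω → W i)
    (hindep : CondIndepGiven μ s ωs) :
    μ.mutualInfo s (tupleRV ωs (∅ : Finset (Fin n))) = 0 ∧
      (∀ ι₁ ι₂ : Finset (Fin n), ι₁ ⊆ ι₂ →
        μ.mutualInfo s (tupleRV ωs ι₁) ≤ μ.mutualInfo s (tupleRV ωs ι₂)) ∧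
      (∀ ι₁ ι₂ : Finset (Fin n), ι₁ ⊆ ι₂ → ι₂ ⊂ Finset.univ → ∀ j ∉ ι₂,
        μ.mutualInfo s (tupleRV ωs (insert j ι₁)) - μ.mutualInfo s (tupleRV ωs ι₁) ≥
          μ.mutualInfo s (tupleRV ωs (insert j ι₂)) - μ.mutualInfo s (tupleRV ωs ι₂)) := by
  refine ⟨?_, ?_, ?_⟩
  · -- normalized
    haveI hIE : IsEmpty { x // x ∈ (∅ : Finset (Fin n)) } :=
      ⟨fun x => absurd x.2 (Finset.notMem_empty _)⟩
    have h1 : μ.entropy (tupleRV ωs (∅ : Finset (Fin n))) = 0 := μ.entropy_unique _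
    have h2 : μ.entropy (fun x => (s x, tupleRV ωs (∅ : Finset (Fin n)) x)) = μ.entropy s := by
      rw [μ.entropy_pair_comm]
      exact μ.entropy_pair_of_det _ _ (fun _ => default) (fun a => Subsingleton.elim _ _)
    simp only [FinProb.mutualInfo, FinProb.condEntropy]
    rw [h1, h2]
    ring
  · -- monotone
    intro ι₁ ι₂ h12
    have core := μ.core_ineq s (tupleRV ωs ι₂) (tupleRV ωs ι₁)
    have E1 : μ.entropy (fun a => (tupleRV ωs ι₂ a, tupleRV ωs ι₁ a))
        = μ.entropy (tupleRV ωs ι₂) := by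
      rw [μ.entropy_pair_comm]
      exact μ.entropy_pair_of_det _ _ (restr h12) (fun a => rfl)
    have E2 : μ.entropy (fun a => (s a, tupleRV ωs ι₂ a, tupleRV ωs ι₁ a))
        = μ.entropy (fun a => (s a, tupleRV ωs ι₂ a)) :=
      μ.entropy_eq_of_det _ _
        (fun q => (q.1, q.2, restr h12 q.2)) (fun q => (q.1, q.2.1))
        (fun a => rfl) (fun a => rfl)
    simp only [FinProb.mutualInfo, FinProb.condEntropy] at *
    linarith
  · -- submodular
    intro ι₁ ι₂ h12 _ j hj
    have hj1 : j ∉ ι₁ := fun h => hj (h12 h)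
    have hd1 : Disjoint ({j} : Finset (Fin n)) ι₁ := Finset.disjoint_singleton_left.mpr hj1
    have hd2 : Disjoint ({j} : Finset (Fin n)) ι₂ := Finset.disjoint_singleton_left.mpr hj
    -- conditional independence identities
    have star1 := μ.condindep_entropy (tupleRV ωs {j}) (tupleRV ωs ι₁) s
      (fun a b v => hindep {j} ι₁ hd1 a b v)
    have star2 := μ.condindep_entropy (tupleRV ωs {j}) (tupleRV ωs ι₂) s
      (fun a b v => hindep {j} ι₂ hd2 a b v)
    -- entropy identifications
    have hA : ∀ (ι : Finset (Fin n)) (_ : j ∉ ι),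
        μ.entropy (fun x => (s x, tupleRV ωs (insert j ι) x))
          = μ.entropy (fun x => (tupleRV ωs {j} x, tupleRV ωs ι x, s x)) := by
      intro ι hjι
      have hjs : ({j} : Finset (Fin n)) ⊆ insert j ι := by simp
      have hιs : ι ⊆ insert j ι := Finset.subset_insert j ι
      have hκ : insert j ι ⊆ {j} ∪ ι := le_of_eq (Finset.insert_eq j ι)
      exact μ.entropy_eq_of_det _ _
        (fun q => (q.2.2, restr hκ (comb (q.1, q.2.1))))
        (fun q => (restr hjs q.2, restr hιs q.2, q.1))
        (fun a => by rw [Prod.mk.injEq]; exact ⟨rfl, restr_comb_tuple hκ ωs a⟩)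
        (fun a => rfl)
    have hB : μ.entropy (fun a => (tupleRV ωs {j} a, tupleRV ωs ι₂ a, tupleRV ωs ι₁ a))
        = μ.entropy (tupleRV ωs (insert j ι₂)) := by
      have hjs : ({j} : Finset (Fin n)) ⊆ insert j ι₂ := by simp
      have hιs : ι₂ ⊆ insert j ι₂ := Finset.subset_insert j ι₂
      have h1s : ι₁ ⊆ insert j ι₂ := h12.trans (Finset.subset_insert j ι₂)
      have hκ : insert j ι₂ ⊆ {j} ∪ ι₂ := le_of_eq (Finset.insert_eq j ι₂)
      exact μ.entropy_eq_of_det _ _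
        (fun u => (restr hjs u, restr hιs u, restr h1s u))
        (fun q => restr hκ (comb (q.1, q.2.1)))
        (fun a => rfl)
        (fun a => restr_comb_tuple hκ ωs a)
    have hC : μ.entropy (fun a => (tupleRV ωs {j} a, tupleRV ωs ι₁ a))
        = μ.entropy (tupleRV ωs (insert j ι₁)) := by
      have hjs : ({j} : Finset (Fin n)) ⊆ insert j ι₁ := by simp
      have hιs : ι₁ ⊆ insert j ι₁ := Finset.subset_insert j ι₁
      have hκ : insert j ι₁ ⊆ {j} ∪ ι₁ := le_of_eq (Finset.insert_eq j ι₁)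
      exact μ.entropy_eq_of_det _ _
        (fun u => (restr hjs u, restr hιs u))
        (fun q => restr hκ (comb q))
        (fun a => rfl)
        (fun a => restr_comb_tuple hκ ωs a)
    have hD : μ.entropy (fun a => (tupleRV ωs ι₂ a, tupleRV ωs ι₁ a))
        = μ.entropy (tupleRV ωs ι₂) := by
      rw [μ.entropy_pair_comm]
      exact μ.entropy_pair_of_det _ _ (restr h12) (fun a => rfl)
    have hE1 : μ.entropy (fun x => (s x, tupleRV ωs ι₁ x))
        = μ.entropy (fun x => (tupleRV ωs ι₁ x, s x)) := μ.entropy_pair_comm _ _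
    have hE2 : μ.entropy (fun x => (s x, tupleRV ωs ι₂ x))
        = μ.entropy (fun x => (tupleRV ωs ι₂ x, s x)) := μ.entropy_pair_comm _ _
    have core := μ.core_ineq (tupleRV ωs {j}) (tupleRV ωs ι₂) (tupleRV ωs ι₁)
    have hA1 := hA ι₁ hj1
    have hA2 := hA ι₂ hj
    simp only [FinProb.mutualInfo, FinProb.condEntropy] at *
    linarith
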